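/- Let M ∈ ℝ^{d₁×d₂} have rank r with smallest nonzero singular value σ_r, and let U ∈ ℝ^{d₁×r}, V ∈ ℝ^{d₂×r} be its top-r left and right singular vectors. For any matrix B ∈ ℝ^{d₁×d₂}, let P_⊥(B) := (I − UUᵀ)B(I − VVᵀ) denote the projection onto the orthogonal complement of the tangent space at M. Then for any matrix N of rank at most r with singular vectors (U_N, V_N) defining its own tangent projection, one has the bound ‖(I − U_N U_Nᵀ)(N − M)(I − V_N V_Nᵀ)‖_F ≤ ‖N − M‖ · ‖N − M‖_F / σ_r, where ‖·‖ is the spectral norm and ‖·‖_F the Frobenius norm. -/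

import Mathlib

open Matrix

/-- Spectral (operator) norm of a real matrix. -/
noncomputable def specNorm {m n : Type*} [Fintype m] [Fintype n] [DecidableEq n]
    (M : Matrix m n ℝ) : ℝ :=
  ‖LinearMap.toContinuousLinearMap (Matrix.toEuclideanLin M)‖

/-- Frobenius norm of a real matrix. -/
noncomputable def frobNorm {m n : Type*} [Fintype m] [Fintype n] (M : Matrix m n ℝ) : ℝ :=
  Real.sqrt (∑ i, ∑ j, (M i j) ^ 2)

open scoped Matrix.Norms.L2Operator

section Aux

variable {m n l : Type*} [Fintype m] [Fintype n] [Fintype l]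

lemma specNorm_eq [DecidableEq n] (A : Matrix m n ℝ) : specNorm A = ‖A‖ := rfl

lemma specNorm_nonneg [DecidableEq n] (A : Matrix m n ℝ) : 0 ≤ specNorm A :=
  norm_nonneg _

lemma specNorm_transpose [DecidableEq m] [DecidableEq n] (A : Matrix m n ℝ) :
    specNorm Aᵀ = specNorm A := by
  rw [specNorm_eq, specNorm_eq, ← conjTranspose_eq_transpose_of_trivial,
    Matrix.l2_opNorm_conjTranspose]

lemma specNorm_mul [DecidableEq n] [DecidableEq l] (A : Matrix m n ℝ) (B : Matrix n l ℝ) :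
    specNorm (A * B) ≤ specNorm A * specNorm B := by
  simpa only [specNorm_eq] using Matrix.l2_opNorm_mul A B

lemma specNorm_one_le [DecidableEq n] : specNorm (1 : Matrix n n ℝ) ≤ 1 := by
  rw [specNorm_eq, Matrix.cstar_norm_def, _root_.map_one]
  exact ContinuousLinearMap.norm_id_le

lemma specNorm_proj_le [DecidableEq n] {P : Matrix n n ℝ} (hsym : Pᵀ = P)
    (hidem : P * P = P) : specNorm P ≤ 1 := by
  have h : specNorm P * specNorm P = specNorm P := by
    rw [specNorm_eq, ← Matrix.l2_opNorm_conjTranspose_mul_self P,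
      conjTranspose_eq_transpose_of_trivial, hsym, hidem]
  nlinarith [specNorm_nonneg P]

lemma specNorm_isometry_le [DecidableEq n] {W : Matrix m n ℝ} (h : Wᵀ * W = 1) :
    specNorm W ≤ 1 := by
  have h1 : specNorm W * specNorm W ≤ 1 := by
    rw [specNorm_eq, ← Matrix.l2_opNorm_conjTranspose_mul_self W,
      conjTranspose_eq_transpose_of_trivial, h, ← specNorm_eq]
    exact specNorm_one_le
  nlinarith [specNorm_nonneg W]

lemma euclidean_norm_eq (z : EuclideanSpace ℝ n) :
    ‖z‖ = Real.sqrt (∑ i, (z i) ^ 2) := by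
  rw [EuclideanSpace.norm_eq]
  congr 1
  exact Finset.sum_congr rfl fun i _ => by rw [Real.norm_eq_abs, sq_abs]

lemma specNorm_diagonal_le [DecidableEq n] {d : n → ℝ} {c : ℝ} (hc : 0 ≤ c)
    (h : ∀ i, |d i| ≤ c) : specNorm (diagonal d) ≤ c := by
  refine ContinuousLinearMap.opNorm_le_bound _ hc fun x => ?_
  have hx : (LinearMap.toContinuousLinearMap (Matrix.toEuclideanLin (diagonal d))) x
      = (EuclideanSpace.equiv n ℝ).symm ((diagonal d) *ᵥ x) := rfl
  rw [hx, euclidean_norm_eq, euclidean_norm_eq x]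
  rw [show (c * Real.sqrt (∑ i, (x i) ^ 2)) = Real.sqrt (c ^ 2 * ∑ i, (x i) ^ 2) by
    rw [Real.sqrt_mul (by positivity), Real.sqrt_sq hc]]
  apply Real.sqrt_le_sqrt
  rw [Finset.mul_sum]
  refine Finset.sum_le_sum fun i _ => ?_
  have hval : ((EuclideanSpace.equiv n ℝ).symm ((diagonal d) *ᵥ x)) i = d i * x i :=
    Matrix.mulVec_diagonal d x i
  rw [hval, mul_pow]
  have h2 : d i ^ 2 ≤ c ^ 2 := by nlinarith [h i, sq_abs (d i), abs_nonneg (d i)]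
  exact mul_le_mul_of_nonneg_right h2 (sq_nonneg _)

lemma frobNorm_nonneg (A : Matrix m n ℝ) : 0 ≤ frobNorm A := Real.sqrt_nonneg _

lemma frobNorm_sq (A : Matrix m n ℝ) : frobNorm A ^ 2 = ∑ i, ∑ j, (A i j) ^ 2 := by
  rw [frobNorm, Real.sq_sqrt (by positivity)]

lemma frobNorm_transpose (A : Matrix m n ℝ) : frobNorm Aᵀ = frobNorm A := by
  rw [frobNorm, frobNorm]
  congr 1
  exact Finset.sum_comm

lemma frobNorm_neg (A : Matrix m n ℝ) : frobNorm (-A) = frobNorm A := by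
  simp [frobNorm]

lemma frobNorm_mul_left [DecidableEq n] (A : Matrix m n ℝ) (B : Matrix n l ℝ) :
    frobNorm (A * B) ≤ specNorm A * frobNorm B := by
  have hsq : frobNorm (A * B) ^ 2 ≤ (specNorm A * frobNorm B) ^ 2 := by
    rw [frobNorm_sq, mul_pow, frobNorm_sq]
    have hstep : ∀ j, ∑ i, ((A * B) i j) ^ 2 ≤ specNorm A ^ 2 * ∑ i, (B i j) ^ 2 := by
      intro j
      set y : EuclideanSpace ℝ n := (EuclideanSpace.equiv n ℝ).symm (fun i => B i j) with hy
      have hb := Matrix.l2_opNorm_mulVec A y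
      have hAB : ∀ i, ((EuclideanSpace.equiv m ℝ).symm (A *ᵥ y)) i = (A * B) i j := by
        intro i
        simp [Matrix.mulVec, Matrix.mul_apply, dotProduct, hy,
          PiLp.toLp_apply]
      have h1 : Real.sqrt (∑ i, ((A * B) i j) ^ 2) ≤ specNorm A * ‖y‖ := by
        calc Real.sqrt (∑ i, ((A * B) i j) ^ 2)
            = ‖(EuclideanSpace.equiv m ℝ).symm (A *ᵥ y)‖ := by
              rw [euclidean_norm_eq]
              exact congrArg Real.sqrt
                (Finset.sum_congr rfl fun i _ => (congrArg (· ^ 2) (hAB i)).symm)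
          _ ≤ specNorm A * ‖y‖ := hb
      have hy2 : ‖y‖ ^ 2 = ∑ i, (B i j) ^ 2 := by
        rw [euclidean_norm_eq, Real.sq_sqrt (by positivity)]
        exact Finset.sum_congr rfl fun i _ => by rw [hy]; rfl
      calc ∑ i, ((A * B) i j) ^ 2
          = Real.sqrt (∑ i, ((A * B) i j) ^ 2) ^ 2 := (Real.sq_sqrt (by positivity)).symm
        _ ≤ (specNorm A * ‖y‖) ^ 2 := by
            nlinarith [Real.sqrt_nonneg (∑ i, ((A * B) i j) ^ 2),
              mul_nonneg (specNorm_nonneg A) (norm_nonneg y)]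
        _ = specNorm A ^ 2 * ∑ i, (B i j) ^ 2 := by rw [mul_pow, hy2]
    calc ∑ i, ∑ j, ((A * B) i j) ^ 2 = ∑ j, ∑ i, ((A * B) i j) ^ 2 := Finset.sum_comm
      _ ≤ ∑ j, specNorm A ^ 2 * ∑ i, (B i j) ^ 2 := Finset.sum_le_sum fun j _ => hstep j
      _ = specNorm A ^ 2 * ∑ j, ∑ i, (B i j) ^ 2 := by rw [← Finset.mul_sum]
      _ = specNorm A ^ 2 * ∑ i, ∑ j, (B i j) ^ 2 := by congr 1; exact Finset.sum_comm
  nlinarith [frobNorm_nonneg (A * B),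
    mul_nonneg (specNorm_nonneg A) (frobNorm_nonneg B)]

lemma frobNorm_mul_right [DecidableEq m] [DecidableEq n] [DecidableEq l]
    (A : Matrix m n ℝ) (B : Matrix n l ℝ) :
    frobNorm (A * B) ≤ frobNorm A * specNorm B := by
  have h : frobNorm (A * B) = frobNorm (Bᵀ * Aᵀ) := by
    rw [← Matrix.transpose_mul, frobNorm_transpose]
  rw [h, mul_comm]
  calc frobNorm (Bᵀ * Aᵀ) ≤ specNorm Bᵀ * frobNorm Aᵀ := frobNorm_mul_left _ _
    _ = specNorm B * frobNorm A := by rw [specNorm_transpose, frobNorm_transpose]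

lemma mul_cancel_left {r k l : Type*} [Fintype r] [Fintype k] [Fintype l]
    [DecidableEq r] (W : Matrix k r ℝ) (h : Wᵀ * W = 1) (X : Matrix r l ℝ) :
    Wᵀ * (W * X) = X := by
  rw [← Matrix.mul_assoc, h, Matrix.one_mul]

lemma mul_cancel_self {r k : Type*} [Fintype r] [Fintype k]
    [DecidableEq r] (W : Matrix k r ℝ) (h : Wᵀ * W = 1) :
    Wᵀ * (W * Wᵀ) = Wᵀ := by
  rw [← Matrix.mul_assoc, h, Matrix.one_mul]

end Aux

set_option maxHeartbeats 1000000 in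
theorem tangent_complement_projection_bound {d₁ d₂ r : ℕ}
    (U UN : Matrix (Fin d₁) (Fin r) ℝ) (V VN : Matrix (Fin d₂) (Fin r) ℝ)
    (σ : Fin r → ℝ) (σr : ℝ)
    (M N : Matrix (Fin d₁) (Fin d₂) ℝ) (SN : Matrix (Fin r) (Fin r) ℝ)
    (hU : Uᵀ * U = 1) (hV : Vᵀ * V = 1)
    (hσr : 0 < σr) (hσ : ∀ i, σr ≤ σ i)
    (hM : M = U * Matrix.diagonal σ * Vᵀ)
    (hUN : UNᵀ * UN = 1) (hVN : VNᵀ * VN = 1)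
    (hN : N = UN * SN * VNᵀ) :
    frobNorm ((1 - UN * UNᵀ) * (N - M) * (1 - VN * VNᵀ))
      ≤ specNorm (N - M) * frobNorm (N - M) / σr := by
  have hσne : ∀ i, σ i ≠ 0 := fun i => ne_of_gt (lt_of_lt_of_le hσr (hσ i))
  set Dinv : Matrix (Fin r) (Fin r) ℝ := Matrix.diagonal (fun i => (σ i)⁻¹) with hDinv
  have hDDinv : Matrix.diagonal σ * Dinv = 1 := by
    rw [hDinv, Matrix.diagonal_mul_diagonal]
    rw [show (fun i => σ i * (σ i)⁻¹) = fun _ => (1 : ℝ) from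
      funext fun i => mul_inv_cancel₀ (hσne i)]
    exact Matrix.diagonal_one
  -- abbreviations (as plain terms)
  have hPN : (1 - UN * UNᵀ) * N = 0 := by
    rw [hN, Matrix.sub_mul, Matrix.one_mul]
    simp only [Matrix.mul_assoc]
    rw [mul_cancel_left UN hUN, sub_self]
  have hNQ : N * (1 - VN * VNᵀ) = 0 := by
    rw [hN, Matrix.mul_sub, Matrix.mul_one]
    simp only [Matrix.mul_assoc]
    rw [mul_cancel_self VN hVN, sub_self]
  have hPd : (1 - UN * UNᵀ) * (N - M) = -((1 - UN * UNᵀ) * M) := by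
    rw [Matrix.mul_sub, hPN, zero_sub]
  have hdQ : (N - M) * (1 - VN * VNᵀ) = -(M * (1 - VN * VNᵀ)) := by
    rw [Matrix.sub_mul, hNQ, zero_sub]
  have hMV : M * V = U * Matrix.diagonal σ := by
    rw [hM]
    simp only [Matrix.mul_assoc]
    rw [hV, Matrix.mul_one]
  have hUM : Uᵀ * M = Matrix.diagonal σ * Vᵀ := by
    rw [hM]
    simp only [Matrix.mul_assoc]
    rw [mul_cancel_left U hU]
  have hUMQ : Uᵀ * (M * (1 - VN * VNᵀ))
      = Matrix.diagonal σ * (Vᵀ * (1 - VN * VNᵀ)) := by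
    rw [← Matrix.mul_assoc, hUM, Matrix.mul_assoc]
  have claim : ((1 - UN * UNᵀ) * M) * (V * Dinv * Uᵀ) * (M * (1 - VN * VNᵀ))
      = (1 - UN * UNᵀ) * M * (1 - VN * VNᵀ) := by
    calc ((1 - UN * UNᵀ) * M) * (V * Dinv * Uᵀ) * (M * (1 - VN * VNᵀ))
        = ((1 - UN * UNᵀ) * (M * V)) * Dinv * (Uᵀ * (M * (1 - VN * VNᵀ))) := by
          simp only [Matrix.mul_assoc]
      _ = ((1 - UN * UNᵀ) * (U * Matrix.diagonal σ)) * Dinv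
            * (Matrix.diagonal σ * (Vᵀ * (1 - VN * VNᵀ))) := by rw [hMV, hUMQ]
      _ = (1 - UN * UNᵀ) * (U * (Matrix.diagonal σ
            * (Dinv * (Matrix.diagonal σ * (Vᵀ * (1 - VN * VNᵀ)))))) := by
          simp only [Matrix.mul_assoc]
      _ = (1 - UN * UNᵀ) * (U * (Matrix.diagonal σ * (Vᵀ * (1 - VN * VNᵀ)))) := by
          rw [← Matrix.mul_assoc (Matrix.diagonal σ) Dinv, hDDinv, Matrix.one_mul]
      _ = (1 - UN * UNᵀ) * M * (1 - VN * VNᵀ) := by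
          rw [hM]; simp only [Matrix.mul_assoc]
  have key : (1 - UN * UNᵀ) * (N - M) * (1 - VN * VNᵀ)
      = -(((1 - UN * UNᵀ) * (N - M)) * (V * Dinv * Uᵀ) * ((N - M) * (1 - VN * VNᵀ))) := by
    calc (1 - UN * UNᵀ) * (N - M) * (1 - VN * VNᵀ)
        = -((1 - UN * UNᵀ) * M) * (1 - VN * VNᵀ) := by rw [hPd]
      _ = -((1 - UN * UNᵀ) * M * (1 - VN * VNᵀ)) := by rw [Matrix.neg_mul]
      _ = -(((1 - UN * UNᵀ) * M) * (V * Dinv * Uᵀ) * (M * (1 - VN * VNᵀ))) := by rw [claim]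
      _ = -((-((1 - UN * UNᵀ) * M)) * (V * Dinv * Uᵀ) * (-(M * (1 - VN * VNᵀ)))) := by
          simp only [Matrix.neg_mul, Matrix.mul_neg, neg_neg]
      _ = -(((1 - UN * UNᵀ) * (N - M)) * (V * Dinv * Uᵀ)
            * ((N - M) * (1 - VN * VNᵀ))) := by rw [← hPd, ← hdQ]
  -- spectral norm bounds
  have hPle : specNorm (1 - UN * UNᵀ) ≤ 1 := by
    refine specNorm_proj_le ?_ ?_
    · simp [Matrix.transpose_sub, Matrix.transpose_mul]
    · rw [Matrix.sub_mul, Matrix.mul_sub, Matrix.mul_sub]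
      simp only [Matrix.one_mul, Matrix.mul_one]
      rw [Matrix.mul_assoc, mul_cancel_self UN hUN]
      abel
  have hQle : specNorm (1 - VN * VNᵀ) ≤ 1 := by
    refine specNorm_proj_le ?_ ?_
    · simp [Matrix.transpose_sub, Matrix.transpose_mul]
    · rw [Matrix.sub_mul, Matrix.mul_sub, Matrix.mul_sub]
      simp only [Matrix.one_mul, Matrix.mul_one]
      rw [Matrix.mul_assoc, mul_cancel_self VN hVN]
      abel
  have hVle : specNorm V ≤ 1 := specNorm_isometry_le hV
  have hUTle : specNorm Uᵀ ≤ 1 := by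
    rw [specNorm_transpose]
    exact specNorm_isometry_le hU
  have hσrinv : (0:ℝ) < σr⁻¹ := inv_pos.mpr hσr
  have hDinvle : specNorm Dinv ≤ σr⁻¹ := by
    refine specNorm_diagonal_le (le_of_lt hσrinv) fun i => ?_
    rw [abs_of_nonneg (le_of_lt (inv_pos.mpr (lt_of_lt_of_le hσr (hσ i))))]
    exact inv_anti₀ hσr (hσ i)
  have hW : specNorm (V * Dinv * Uᵀ) ≤ σr⁻¹ := by
    have h1 : specNorm (V * Dinv) ≤ σr⁻¹ := by
      calc specNorm (V * Dinv) ≤ specNorm V * specNorm Dinv := specNorm_mul _ _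
        _ ≤ 1 * σr⁻¹ := mul_le_mul hVle hDinvle (specNorm_nonneg _) zero_le_one
        _ = σr⁻¹ := one_mul _
    calc specNorm (V * Dinv * Uᵀ) ≤ specNorm (V * Dinv) * specNorm Uᵀ := specNorm_mul _ _
      _ ≤ σr⁻¹ * 1 := mul_le_mul h1 hUTle (specNorm_nonneg _) (le_of_lt hσrinv)
      _ = σr⁻¹ := mul_one _
  have hPΔ : specNorm ((1 - UN * UNᵀ) * (N - M)) ≤ specNorm (N - M) := by
    calc specNorm ((1 - UN * UNᵀ) * (N - M))
        ≤ specNorm (1 - UN * UNᵀ) * specNorm (N - M) := specNorm_mul _ _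
      _ ≤ 1 * specNorm (N - M) := mul_le_mul_of_nonneg_right hPle (specNorm_nonneg _)
      _ = specNorm (N - M) := one_mul _
  have hΔQ : frobNorm ((N - M) * (1 - VN * VNᵀ)) ≤ frobNorm (N - M) := by
    calc frobNorm ((N - M) * (1 - VN * VNᵀ))
        ≤ frobNorm (N - M) * specNorm (1 - VN * VNᵀ) := frobNorm_mul_right _ _
      _ ≤ frobNorm (N - M) * 1 := mul_le_mul_of_nonneg_left hQle (frobNorm_nonneg _)
      _ = frobNorm (N - M) := mul_one _
  calc frobNorm ((1 - UN * UNᵀ) * (N - M) * (1 - VN * VNᵀ))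
      = frobNorm (((1 - UN * UNᵀ) * (N - M))
          * ((V * Dinv * Uᵀ) * ((N - M) * (1 - VN * VNᵀ)))) := by
        rw [key, frobNorm_neg, Matrix.mul_assoc]
    _ ≤ specNorm ((1 - UN * UNᵀ) * (N - M))
          * frobNorm ((V * Dinv * Uᵀ) * ((N - M) * (1 - VN * VNᵀ))) := frobNorm_mul_left _ _
    _ ≤ specNorm (N - M) * (σr⁻¹ * frobNorm (N - M)) := by
        have h1 : frobNorm ((V * Dinv * Uᵀ) * ((N - M) * (1 - VN * VNᵀ)))
            ≤ specNorm (V * Dinv * Uᵀ) * frobNorm ((N - M) * (1 - VN * VNᵀ)) :=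
          frobNorm_mul_left _ _
        have h2 : specNorm (V * Dinv * Uᵀ) * frobNorm ((N - M) * (1 - VN * VNᵀ))
            ≤ σr⁻¹ * frobNorm (N - M) :=
          mul_le_mul hW hΔQ (frobNorm_nonneg _) (le_of_lt hσrinv)
        exact mul_le_mul hPΔ (h1.trans h2) (frobNorm_nonneg _) (specNorm_nonneg _)
    _ = specNorm (N - M) * frobNorm (N - M) / σr := by rw [div_eq_mul_inv]; ring
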